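/- Let λ > 0, Δx > 0, P̄ > 0, ν > 0 and N0 > 0 be real numbers. Set θ = λ/(2Δx), P = Δx·P̄, β = ⌊1/θ⌋, α = 1/θ − β, and for f ∈ ℝ let N_θ(f) = #{k ∈ ℤ : |f − kθ| < 1/2}. Then (1/θ) · ∫_{−θ/2}^{θ/2} log( 1 + (Pν/N0)·θ·N_θ(f) ) df = α·log( 1 + (β+1)·λ·P̄·ν/(2N0) ) + (1−α)·log( 1 + β·λ·P̄·ν/(2N0) ). -/

import Mathlib

open Real MeasureTheory

noncomputable def cnt (θ f : ℝ) : ℤ := ⌈(f + 1/2)/θ⌉ - ⌊(f - 1/2)/θ⌋ - 1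

lemma ncard_eq {θ : ℝ} (hθ : 0 < θ) (f : ℝ) :
    {k : ℤ | |f - k * θ| < 1/2}.ncard = (cnt θ f).toNat := by
  have hset : {k : ℤ | |f - k * θ| < 1/2} =
      ↑(Finset.Ioo ⌊(f - 1/2)/θ⌋ ⌈(f + 1/2)/θ⌉) := by
    ext k
    simp only [Set.mem_setOf_eq, Finset.coe_Ioo, Set.mem_Ioo, abs_lt, Int.floor_lt,
      Int.lt_ceil, div_lt_iff₀ hθ, lt_div_iff₀ hθ]
    constructor
    · rintro ⟨h1, h2⟩; constructor <;> linarith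
    · rintro ⟨h1, h2⟩; constructor <;> linarith
  rw [hset, Set.ncard_coe_finset, Int.card_Ioo]
  rfl

lemma cnt_neg (θ f : ℝ) : cnt θ (-f) = cnt θ f := by
  unfold cnt
  have h1 : (-f + 1/2)/θ = -((f - 1/2)/θ) := by ring
  have h2 : (-f - 1/2)/θ = -((f + 1/2)/θ) := by ring
  rw [h1, h2, Int.ceil_neg, Int.floor_neg]
  ring

lemma piece_eq (g : ℝ → ℝ) (p q E : ℝ) (hpq : p ≤ q)
    (h : ∀ x, p < x → x < q → g x = E) :
    IntervalIntegrable g volume p q ∧ ∫ x in p..q, g x = (q - p) * E := by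
  have hq : ∀ᵐ x : ℝ ∂volume, x ≠ q := by
    have := compl_mem_ae_iff.mpr (measure_singleton (q : ℝ) (μ := volume))
    filter_upwards [this] with x hx
    simpa using hx
  have hae : g =ᵐ[volume.restrict (Set.Ioc p q)] fun _ => E := by
    filter_upwards [ae_restrict_of_ae hq, ae_restrict_mem measurableSet_Ioc] with x hxq hxs
    exact h x hxs.1 (lt_of_le_of_ne hxs.2 hxq)
  have hint : IntegrableOn g (Set.Ioc p q) volume := by
    refine ((MeasureTheory.integrableOn_const_iff (C := E)).mpr (Or.inr ?_)).congr hae.symm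
    exact measure_Ioc_lt_top
  constructor
  · exact (intervalIntegrable_iff_integrableOn_Ioc_of_le hpq).mpr hint
  · have hcg : ∫ x in p..q, g x = ∫ _x in p..q, E := by
      refine intervalIntegral.integral_congr_ae ?_
      filter_upwards [hq] with x hx hmem
      rw [Set.uIoc_of_le hpq] at hmem
      exact h x hmem.1 (lt_of_le_of_ne hmem.2 hx)
    rw [hcg, intervalIntegral.integral_const, smul_eq_mul]

lemma integral_three_piece (a d : ℝ) (h0 : 0 ≤ d) (hda : d ≤ a)
    (g : ℝ → ℝ) (C D : ℝ)
    (hsym : ∀ x, g (-x) = g x)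
    (hm : ∀ x, -d < x → x < d → g x = D)
    (hr : ∀ x, d < x → x < a → g x = C) :
    ∫ x in (-a)..a, g x = 2*(a - d)*C + 2*d*D := by
  have hl : ∀ x, -a < x → x < -d → g x = C := by
    intro x h1 h2
    rw [← hsym x]; exact hr (-x) (by linarith) (by linarith)
  obtain ⟨i1, e1⟩ := piece_eq g (-a) (-d) C (by linarith) hl
  obtain ⟨i2, e2⟩ := piece_eq g (-d) d D (by linarith) hm
  obtain ⟨i3, e3⟩ := piece_eq g d a C hda hr
  rw [← intervalIntegral.integral_add_adjacent_intervals (i1.trans i2) i3,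
    ← intervalIntegral.integral_add_adjacent_intervals i1 i2, e1, e2, e3]
  ring

lemma cnt_even_right (θ α f : ℝ) (m : ℤ) (hθ : 0 < θ) (h1 : θ * (2*m + α) = 1)
    (hα0 : 0 ≤ α) (hα1 : α ≤ 1) (hf1 : α*θ/2 < f) (hf2 : f < θ/2) : cnt θ f = 2*m := by
  have hc : ⌈(f + 1/2)/θ⌉ = m + 1 := by
    rw [Int.ceil_eq_iff]
    refine ⟨by rw [lt_div_iff₀ hθ]; push_cast; nlinarith [mul_nonneg hα0 hθ.le, mul_nonneg (sub_nonneg.mpr hα1) hθ.le],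
      by rw [div_le_iff₀ hθ]; push_cast; nlinarith [mul_nonneg hα0 hθ.le, mul_nonneg (sub_nonneg.mpr hα1) hθ.le]⟩
  have hfl : ⌊(f - 1/2)/θ⌋ = -m := by
    rw [Int.floor_eq_iff]
    refine ⟨by rw [le_div_iff₀ hθ]; push_cast; nlinarith [mul_nonneg hα0 hθ.le, mul_nonneg (sub_nonneg.mpr hα1) hθ.le],
      by rw [div_lt_iff₀ hθ]; push_cast; nlinarith [mul_nonneg hα0 hθ.le, mul_nonneg (sub_nonneg.mpr hα1) hθ.le]⟩
  unfold cnt; rw [hc, hfl]; ring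

lemma cnt_even_mid (θ α f : ℝ) (m : ℤ) (hθ : 0 < θ) (h1 : θ * (2*m + α) = 1)
    (hα0 : 0 ≤ α) (hα1 : α ≤ 1) (hf1 : -(α*θ/2) < f) (hf2 : f < α*θ/2) : cnt θ f = 2*m + 1 := by
  have hc : ⌈(f + 1/2)/θ⌉ = m + 1 := by
    rw [Int.ceil_eq_iff]
    refine ⟨by rw [lt_div_iff₀ hθ]; push_cast; nlinarith [mul_nonneg hα0 hθ.le, mul_nonneg (sub_nonneg.mpr hα1) hθ.le],
      by rw [div_le_iff₀ hθ]; push_cast; nlinarith [mul_nonneg hα0 hθ.le, mul_nonneg (sub_nonneg.mpr hα1) hθ.le]⟩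
  have hfl : ⌊(f - 1/2)/θ⌋ = -m - 1 := by
    rw [Int.floor_eq_iff]
    refine ⟨by rw [le_div_iff₀ hθ]; push_cast; nlinarith [mul_nonneg hα0 hθ.le, mul_nonneg (sub_nonneg.mpr hα1) hθ.le],
      by rw [div_lt_iff₀ hθ]; push_cast; nlinarith [mul_nonneg hα0 hθ.le, mul_nonneg (sub_nonneg.mpr hα1) hθ.le]⟩
  unfold cnt; rw [hc, hfl]; ring

lemma cnt_odd_right (θ α f : ℝ) (m : ℤ) (hθ : 0 < θ) (h1 : θ * (2*m + 1 + α) = 1)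
    (hα0 : 0 ≤ α) (hα1 : α ≤ 1) (hf1 : (1-α)*θ/2 < f) (hf2 : f < θ/2) : cnt θ f = 2*m + 2 := by
  have hc : ⌈(f + 1/2)/θ⌉ = m + 2 := by
    rw [Int.ceil_eq_iff]
    refine ⟨by rw [lt_div_iff₀ hθ]; push_cast; nlinarith [mul_nonneg hα0 hθ.le, mul_nonneg (sub_nonneg.mpr hα1) hθ.le],
      by rw [div_le_iff₀ hθ]; push_cast; nlinarith [mul_nonneg hα0 hθ.le, mul_nonneg (sub_nonneg.mpr hα1) hθ.le]⟩
  have hfl : ⌊(f - 1/2)/θ⌋ = -m - 1 := by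
    rw [Int.floor_eq_iff]
    refine ⟨by rw [le_div_iff₀ hθ]; push_cast; nlinarith [mul_nonneg hα0 hθ.le, mul_nonneg (sub_nonneg.mpr hα1) hθ.le],
      by rw [div_lt_iff₀ hθ]; push_cast; nlinarith [mul_nonneg hα0 hθ.le, mul_nonneg (sub_nonneg.mpr hα1) hθ.le]⟩
  unfold cnt; rw [hc, hfl]; ring

lemma cnt_odd_mid (θ α f : ℝ) (m : ℤ) (hθ : 0 < θ) (h1 : θ * (2*m + 1 + α) = 1)
    (hα0 : 0 ≤ α) (hα1 : α ≤ 1) (hf1 : -((1-α)*θ/2) < f) (hf2 : f < (1-α)*θ/2) : cnt θ f = 2*m + 1 := by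
  have hc : ⌈(f + 1/2)/θ⌉ = m + 1 := by
    rw [Int.ceil_eq_iff]
    refine ⟨by rw [lt_div_iff₀ hθ]; push_cast; nlinarith [mul_nonneg hα0 hθ.le, mul_nonneg (sub_nonneg.mpr hα1) hθ.le],
      by rw [div_le_iff₀ hθ]; push_cast; nlinarith [mul_nonneg hα0 hθ.le, mul_nonneg (sub_nonneg.mpr hα1) hθ.le]⟩
  have hfl : ⌊(f - 1/2)/θ⌋ = -m - 1 := by
    rw [Int.floor_eq_iff]
    refine ⟨by rw [le_div_iff₀ hθ]; push_cast; nlinarith [mul_nonneg hα0 hθ.le, mul_nonneg (sub_nonneg.mpr hα1) hθ.le],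
      by rw [div_lt_iff₀ hθ]; push_cast; nlinarith [mul_nonneg hα0 hθ.le, mul_nonneg (sub_nonneg.mpr hα1) hθ.le]⟩
  unfold cnt; rw [hc, hfl]; ring

/-- Property 1 of the paper: closed form for the per-terminal capacity of the optimal
receiver in the one-dimensional deployment. Here `θ = λ/(2Δx)`, `P = Δx·P̄`,
`β = ⌊1/θ⌋`, `α = 1/θ - β`, and `N_θ(f) = #{k ∈ ℤ : |f - kθ| < 1/2}` gives the folded
spectrum `G(f) = θPν·N_θ(f)` on `[-θ/2, θ/2]`. -/
theorem capacity_optimal_receiver_1D (lam Δx Pbar ν N0 : ℝ)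
    (hlam : 0 < lam) (hΔx : 0 < Δx) (hP : 0 < Pbar) (hν : 0 < ν) (hN0 : 0 < N0) :
    let θ := lam / (2 * Δx)
    let P := Δx * Pbar
    let β : ℝ := (⌊1 / θ⌋ : ℝ)
    let α : ℝ := 1 / θ - β
    (1 / θ) * (∫ f in (-(θ / 2))..(θ / 2),
        Real.log (1 + (P * ν / N0) * θ * (({k : ℤ | |f - k * θ| < 1 / 2}.ncard : ℕ) : ℝ)))
      = α * Real.log (1 + (β + 1) * lam * Pbar * ν / (2 * N0))
        + (1 - α) * Real.log (1 + β * lam * Pbar * ν / (2 * N0)) := by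
  intro θ P β α
  have hθ : 0 < θ := div_pos hlam (by linarith)
  have hθne : θ ≠ 0 := hθ.ne'
  have htpos : 0 < 1/θ := by positivity
  have hβ : β = ((⌊1/θ⌋ : ℤ) : ℝ) := rfl
  have hαdef : α = 1/θ - β := rfl
  have hB0 : (0:ℤ) ≤ ⌊1/θ⌋ := Int.floor_nonneg.mpr htpos.le
  have hα0 : 0 ≤ α := by rw [hαdef, hβ]; simp [sub_nonneg, Int.floor_le]
  have hα1 : α < 1 := by
    have := Int.lt_floor_add_one (1/θ)
    rw [hαdef, hβ]; linarith
  have hαB : 1/θ = ((⌊1/θ⌋ : ℤ) : ℝ) + α := by rw [hαdef, hβ]; ring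
  have hPθ : ∀ x : ℝ, 1 + (P * ν / N0) * θ * x = 1 + (x * lam * Pbar * ν) / (2 * N0) := by
    intro x
    have hθv : θ = lam / (2 * Δx) := rfl
    have hPv : P = Δx * Pbar := rfl
    rw [hθv, hPv]
    field_simp
  have hrw : (∫ f in (-(θ / 2))..(θ / 2),
        Real.log (1 + (P * ν / N0) * θ * (({k : ℤ | |f - k * θ| < 1 / 2}.ncard : ℕ) : ℝ)))
      = ∫ f in (-(θ / 2))..(θ / 2),
        Real.log (1 + (P * ν / N0) * θ * (((cnt θ f).toNat : ℕ) : ℝ)) := by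
    simp only [ncard_eq hθ]
  rw [hrw]
  clear_value θ P β α
  set C0 : ℝ := Real.log (1 + (P * ν / N0) * θ * ((⌊1/θ⌋ : ℤ) : ℝ)) with hC0
  set C1 : ℝ := Real.log (1 + (P * ν / N0) * θ * (((⌊1/θ⌋ : ℤ) : ℝ) + 1)) with hC1
  have hsym : ∀ x : ℝ, Real.log (1 + (P * ν / N0) * θ * (((cnt θ (-x)).toNat : ℕ) : ℝ))
      = Real.log (1 + (P * ν / N0) * θ * (((cnt θ x).toNat : ℕ) : ℝ)) := by
    intro x; rw [cnt_neg]
  have hgoalrhs : α * Real.log (1 + (β + 1) * lam * Pbar * ν / (2 * N0))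
        + (1 - α) * Real.log (1 + β * lam * Pbar * ν / (2 * N0)) = α * C1 + (1 - α) * C0 := by
    rw [hC0, hC1, hPθ, hPθ, hβ]
  rw [hgoalrhs]
  rcases Int.even_or_odd ⌊1/θ⌋ with ⟨m, hmB⟩ | ⟨m, hmB⟩
  · -- even case
    have hm0 : (0:ℤ) ≤ m := by omega
    have h1 : θ * (2*(m:ℝ) + α) = 1 := by
      have hBm : ((⌊1/θ⌋ : ℤ) : ℝ) = 2*(m:ℝ) := by push_cast [hmB]; ring
      have : 2*(m:ℝ) + α = 1/θ := by rw [hαB, hBm]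
      rw [this, mul_one_div_cancel hθne]
    have hmid : ∀ x : ℝ, -(α*θ/2) < x → x < α*θ/2 →
        Real.log (1 + (P * ν / N0) * θ * (((cnt θ x).toNat : ℕ) : ℝ)) = C1 := by
      intro x hx1 hx2
      have hcast : (((2*m+1 : ℤ)).toNat : ℝ) = ((⌊1/θ⌋ : ℤ) : ℝ) + 1 := by
        rw [← Int.cast_natCast (R := ℝ), Int.toNat_of_nonneg (by omega)]
        push_cast [hmB]; ring
      rw [cnt_even_mid θ α x m hθ h1 hα0 hα1.le hx1 hx2, hcast, hC1]
    have hright : ∀ x : ℝ, α*θ/2 < x → x < θ/2 →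
        Real.log (1 + (P * ν / N0) * θ * (((cnt θ x).toNat : ℕ) : ℝ)) = C0 := by
      intro x hx1 hx2
      have hcast : (((2*m : ℤ)).toNat : ℝ) = ((⌊1/θ⌋ : ℤ) : ℝ) := by
        rw [← Int.cast_natCast (R := ℝ), Int.toNat_of_nonneg (by omega)]
        push_cast [hmB]; ring
      rw [cnt_even_right θ α x m hθ h1 hα0 hα1.le hx1 hx2, hcast, hC0]
    rw [integral_three_piece (θ/2) (α*θ/2) (by positivity)
      (by have := mul_le_mul_of_nonneg_right hα1.le hθ.le; linarith) _ C0 C1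
      hsym hmid hright]
    first
    | (field_simp; ring)
    | field_simp
    | ring
  · -- odd case
    have hm0 : (0:ℤ) ≤ m := by omega
    have h1 : θ * (2*(m:ℝ) + 1 + α) = 1 := by
      have hBm : ((⌊1/θ⌋ : ℤ) : ℝ) = 2*(m:ℝ) + 1 := by push_cast [hmB]; ring
      have : 2*(m:ℝ) + 1 + α = 1/θ := by rw [hαB, hBm]
      rw [this, mul_one_div_cancel hθne]
    have hmid : ∀ x : ℝ, -((1-α)*θ/2) < x → x < (1-α)*θ/2 →
        Real.log (1 + (P * ν / N0) * θ * (((cnt θ x).toNat : ℕ) : ℝ)) = C0 := by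
      intro x hx1 hx2
      have hcast : (((2*m+1 : ℤ)).toNat : ℝ) = ((⌊1/θ⌋ : ℤ) : ℝ) := by
        rw [← Int.cast_natCast (R := ℝ), Int.toNat_of_nonneg (by omega)]
        push_cast [hmB]; ring
      rw [cnt_odd_mid θ α x m hθ h1 hα0 hα1.le hx1 hx2, hcast, hC0]
    have hright : ∀ x : ℝ, (1-α)*θ/2 < x → x < θ/2 →
        Real.log (1 + (P * ν / N0) * θ * (((cnt θ x).toNat : ℕ) : ℝ)) = C1 := by
      intro x hx1 hx2
      have hcast : (((2*m+2 : ℤ)).toNat : ℝ) = ((⌊1/θ⌋ : ℤ) : ℝ) + 1 := by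
        rw [← Int.cast_natCast (R := ℝ), Int.toNat_of_nonneg (by omega)]
        push_cast [hmB]; ring
      rw [cnt_odd_right θ α x m hθ h1 hα0 hα1.le hx1 hx2, hcast, hC1]
    rw [integral_three_piece (θ/2) ((1-α)*θ/2)
      (by have := mul_nonneg (show (0:ℝ) ≤ 1 - α by linarith) hθ.le; linarith)
      (by have := mul_le_mul_of_nonneg_right (show (1:ℝ) - α ≤ 1 by linarith) hθ.le; linarith) _ C1 C0
      hsym hmid hright]
    first
    | (field_simp; ring)
    | field_simp
    | ring
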